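/- Let α, β be real numbers with |α| + |β| < 1 and β ≠ 0. Then the 2×2 real symmetric matrix M with entries M₀₀ = α² − 1 + |β|, M₀₁ = M₁₀ = αβ, M₁₁ = β² − |β| is negative definite: for every nonzero v ∈ ℝ², v ⬝ᵥ (M.mulVec v) < 0. In particular M₀₀ < 0 and det M = |β|((|β| − 1)² − α²) > 0. -/
import Mathlib


open Matrix

theorem kawahara_matrix_neg_def (α β : ℝ) (hab : |α| + |β| < 1) (hβ : β ≠ 0) :
    (∀ v : Fin 2 → ℝ, v ≠ 0 →
      v ⬝ᵥ (!![α ^ 2 - 1 + |β|, α * β; α * β, β ^ 2 - |β|]).mulVec v < 0) ∧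
    (!![α ^ 2 - 1 + |β|, α * β; α * β, β ^ 2 - |β|]) 0 0 < 0 ∧
    (!![α ^ 2 - 1 + |β|, α * β; α * β, β ^ 2 - |β|]).det
      = |β| * ((|β| - 1) ^ 2 - α ^ 2) ∧
    0 < (!![α ^ 2 - 1 + |β|, α * β; α * β, β ^ 2 - |β|]).det := by
  have hb0 : 0 < |β| := abs_pos.mpr hβ
  have hb1 : |β| < 1 := by have := abs_nonneg α; linarith
  have ha : |α| < 1 - |β| := by linarith
  have ha0 : 0 ≤ |α| := abs_nonneg α
  have haa : α ^ 2 < (1 - |β|) ^ 2 := by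
    have : |α| ^ 2 < (1 - |β|) ^ 2 := by nlinarith
    simpa [sq_abs] using this
  have hA : α ^ 2 - 1 + |β| < 0 := by nlinarith
  have hbsq : β ^ 2 = |β| ^ 2 := (sq_abs β).symm
  have hdet : (!![α ^ 2 - 1 + |β|, α * β; α * β, β ^ 2 - |β|]).det
      = |β| * ((|β| - 1) ^ 2 - α ^ 2) := by
    rw [Matrix.det_fin_two_of]
    nlinarith [sq_abs β, sq_abs α]
  have hdetpos : 0 < |β| * ((|β| - 1) ^ 2 - α ^ 2) := by
    apply mul_pos hb0; nlinarith
  refine ⟨?_, by simpa using hA, hdet, by rw [hdet]; exact hdetpos⟩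
  intro v hv
  have hv' : v 0 ≠ 0 ∨ v 1 ≠ 0 := by
    by_contra h
    push_neg at h
    apply hv
    funext i
    fin_cases i <;> simp [h.1, h.2]
  have hq : v ⬝ᵥ (!![α ^ 2 - 1 + |β|, α * β; α * β, β ^ 2 - |β|]).mulVec v
      = (α ^ 2 - 1 + |β|) * v 0 ^ 2 + 2 * (α * β) * (v 0 * v 1)
        + (β ^ 2 - |β|) * v 1 ^ 2 := by
    simp [dotProduct, Matrix.mulVec, Fin.sum_univ_two]
    ring
  rw [hq]
  set a := α ^ 2 - 1 + |β| with hadef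
  have key : a * ((a) * v 0 ^ 2 + 2 * (α * β) * (v 0 * v 1) + (β ^ 2 - |β|) * v 1 ^ 2)
      = (a * v 0 + α * β * v 1) ^ 2 + (a * (β ^ 2 - |β|) - (α * β) ^ 2) * v 1 ^ 2 := by
    ring
  have hdet2 : 0 < a * (β ^ 2 - |β|) - (α * β) ^ 2 := by
    have : a * (β ^ 2 - |β|) - (α * β) ^ 2 = |β| * ((|β| - 1) ^ 2 - α ^ 2) := by
      rw [hadef]; nlinarith [sq_abs β]
    linarith [this ▸ hdetpos]
  have hpos : 0 < (a * v 0 + α * β * v 1) ^ 2 + (a * (β ^ 2 - |β|) - (α * β) ^ 2) * v 1 ^ 2 := by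
    rcases eq_or_ne (v 1) 0 with h1 | h1
    · have h0 : v 0 ≠ 0 := by rcases hv' with h | h; exact h; exact absurd h1 h
      have : a * v 0 + α * β * v 1 ≠ 0 := by
        simp [h1]; exact ⟨ne_of_lt hA, h0⟩
      have t1 := pow_two_pos_of_ne_zero this
      have t2 : 0 ≤ (a * (β ^ 2 - |β|) - (α * β) ^ 2) * v 1 ^ 2 :=
        mul_nonneg hdet2.le (sq_nonneg _)
      linarith
    · have t1 := sq_nonneg (a * v 0 + α * β * v 1)
      have t2 := mul_pos hdet2 (pow_two_pos_of_ne_zero h1)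
      linarith
  have hprod : 0 < a * (a * v 0 ^ 2 + 2 * (α * β) * (v 0 * v 1) + (β ^ 2 - |β|) * v 1 ^ 2) :=
    key ▸ hpos
  nlinarith [hprod, hA]
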